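/- (Degree classification of integer polynomial solutions.) Let m, n₀, n₁ be positive integers with m ≥ 4, gcd(n₀, n₁) = 1 and gcd(n₁, m) = 1. If x, y, z is an integer polynomial solution of equation (2), then exactly two of the three polynomials x, y, z have degree 1 and the remaining one has degree 2. -/

import Mathlib

open Polynomial


private lemma lcPos {p : Polynomial ℤ} (h : ∀ t : ℕ, 0 < p.eval (t : ℤ)) :
    0 < p.leadingCoeff := by
  have hp0 : p ≠ 0 := fun h0 => by simpa [h0] using h 0
  rcases Nat.eq_zero_or_pos p.natDegree with h0 | hpos
  · have h00 := h 0
    rw [Polynomial.leadingCoeff, h0]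
    rwa [Polynomial.coeff_zero_eq_eval_zero]
  · by_contra hle
    push_neg at hle
    set P : Polynomial ℝ := p.map (Int.castRingHom ℝ) with hP
    have hdeg : 0 < P.degree := by
      rw [Polynomial.degree_map_eq_of_injective (f := Int.castRingHom ℝ) (fun a b => by simp)]
      exact Polynomial.natDegree_pos_iff_degree_pos.mp hpos
    have hlc : P.leadingCoeff ≤ 0 := by
      rw [Polynomial.leadingCoeff_map_of_injective (f := Int.castRingHom ℝ) (fun a b => by simp)]
      simpa using hle
    have htend := Polynomial.tendsto_atBot_of_leadingCoeff_nonpos P hdeg hlc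
    have hev : ∀ᶠ (x : ℝ) in Filter.atTop, P.eval x < 0 :=
      htend.eventually (Filter.eventually_lt_atBot 0)
    obtain ⟨a, ha⟩ := Filter.eventually_atTop.mp hev
    obtain ⟨t, ht⟩ := exists_nat_ge a
    have h1 : P.eval (t : ℝ) < 0 := ha _ ht
    have h2 : P.eval (((t : ℤ) : ℤ) : ℝ) = ((p.eval (t : ℤ) : ℤ) : ℝ) := by
      rw [hP]; exact Polynomial.eval_intCast_map (Int.castRingHom ℝ) p (t : ℤ)
    push_cast at h2
    rw [h2] at h1
    have h3 := h t
    have h4 : (0 : ℝ) < ((p.eval (t : ℤ) : ℤ) : ℝ) := by exact_mod_cast h3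
    linarith

private lemma nDeg {n₀ n₁ : ℤ} (hn₁ : n₁ ≠ 0) : (C n₀ + C n₁ * X).natDegree = 1 := by
  have : (C n₀ + C n₁ * X : Polynomial ℤ) = C n₁ * X + C n₀ := by ring
  rw [this]; exact natDegree_linear hn₁

private lemma nPrime {n₀ n₁ : ℤ} (hn₁ : n₁ ≠ 0) (hcop : Int.gcd n₀ n₁ = 1) :
    Prime (C n₀ + C n₁ * X) := by
  set N : Polynomial ℤ := C n₀ + C n₁ * X with hN
  have hNeq : N = C n₁ * X + C n₀ := by rw [hN]; ring
  have hprim : N.IsPrimitive := by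
    intro r hr
    rw [Polynomial.C_dvd_iff_dvd_coeff] at hr
    have h0 : r ∣ n₀ := by have := hr 0; simpa [hN] using this
    have h1 : r ∣ n₁ := by
      have := hr 1
      rw [hN, Polynomial.coeff_add, Polynomial.coeff_C_mul, Polynomial.coeff_X_one,
        Polynomial.coeff_C] at this
      simpa using this
    have : r ∣ (Int.gcd n₀ n₁ : ℤ) := Int.dvd_coe_gcd h0 h1
    rw [hcop] at this
    exact isUnit_of_dvd_one this
  have hirr : Irreducible N := by
    rw [Polynomial.IsPrimitive.Int.irreducible_iff_irreducible_map_cast hprim]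
    apply irreducible_of_degree_eq_one
    have : N.map (Int.castRingHom ℚ) = C (n₁ : ℚ) * X + C (n₀ : ℚ) := by
      rw [hNeq]; simp [Polynomial.map_add, Polynomial.map_mul]
    rw [this]
    exact degree_linear (by exact_mod_cast hn₁)
  exact hirr.prime

private lemma notDvdC {n₀ n₁ : ℤ} (hn₁ : n₁ ≠ 0) {k : ℤ} (hk : k ≠ 0) :
    ¬ ((C n₀ + C n₁ * X : Polynomial ℤ) ∣ C k) := by
  intro h
  have h1 : (C n₀ + C n₁ * X : Polynomial ℤ).natDegree ≤ (C k : Polynomial ℤ).natDegree :=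
    natDegree_le_of_dvd h (by simpa using hk)
  rw [nDeg hn₁, natDegree_C] at h1
  omega

private lemma quotConst {n₀ n₁ : ℤ} (hn₀ : 0 < n₀) (hn₁ : 0 < n₁) {y : Polynomial ℤ}
    (hy : ∀ t : ℕ, 0 < y.eval (t : ℤ)) (hdy : y.natDegree = 1)
    (hdvd : (C n₀ + C n₁ * X : Polynomial ℤ) ∣ y) :
    ∃ e : ℤ, 0 < e ∧ y = C e * (C n₀ + C n₁ * X) := by
  set N : Polynomial ℤ := C n₀ + C n₁ * X with hN
  have hN0 : N ≠ 0 := by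
    intro h
    have h2 : N.eval 0 = 0 := by rw [h]; simp
    simp [hN] at h2
    omega
  obtain ⟨q, hq⟩ := hdvd
  have hy0 : y ≠ 0 := fun h0 => by simpa [h0] using hy 0
  have hq0 : q ≠ 0 := by rintro rfl; rw [mul_zero] at hq; exact hy0 hq
  have hdq : q.natDegree = 0 := by
    have h1 : y.natDegree = N.natDegree + q.natDegree := by
      rw [hq]; exact natDegree_mul hN0 hq0
    rw [hdy, nDeg hn₁.ne'] at h1
    omega
  obtain ⟨e, he⟩ : ∃ e, q = C e := ⟨q.coeff 0, Polynomial.eq_C_of_natDegree_eq_zero hdq⟩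
  refine ⟨e, ?_, by rw [hq, he]; ring⟩
  have h0 := hy 0
  rw [hq, he] at h0
  simp [hN] at h0
  nlinarith [hn₀, h0]

private lemma deg1X (m n₀ n₁ : ℤ) (hm : 4 ≤ m) (hn₀ : 0 < n₀) (hn₁ : 0 < n₁)
    (hcop : Int.gcd n₀ n₁ = 1)
    (x y z : Polynomial ℤ) (hx : ∀ t : ℕ, 0 < x.eval (t : ℤ))
    (hy : ∀ t : ℕ, 0 < y.eval (t : ℤ)) (hz : ∀ t : ℕ, 0 < z.eval (t : ℤ))
    (hdx : x.natDegree = 1) (hdy : y.natDegree = 1) (hdz : z.natDegree = 1)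
    (E : C m * (x * y * z) = (C n₀ + C n₁ * X) * (x * y + x * z + y * z))
    (hdvd : (C n₀ + C n₁ * X : Polynomial ℤ) ∣ x) : False := by
  set N : Polynomial ℤ := C n₀ + C n₁ * X with hN
  have hNp : Prime N := nPrime hn₁.ne' hcop
  have hN0 : N ≠ 0 := hNp.ne_zero
  obtain ⟨c, hc, hxc⟩ := quotConst hn₀ hn₁ hx hdx hdvd
  rw [hxc] at E
  have E3 : (C m * C c - 1) * (y * z) = C c * N * (y + z) := by
    apply mul_left_cancel₀ hN0
    linear_combination E
  -- the key symmetric step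
  have hkey : ∀ u v : Polynomial ℤ, (∀ t : ℕ, 0 < u.eval (t : ℤ)) →
      (∀ t : ℕ, 0 < v.eval (t : ℤ)) → u.natDegree = 1 → v.natDegree = 1 →
      ((C m * C c - 1) * (u * v) = C c * N * (u + v)) → N ∣ u → False := by
    intro u v hu hv hdu hdv E3 hdvdu
    obtain ⟨e, he, hue⟩ := quotConst hn₀ hn₁ hu hdu hdvdu
    rw [hue] at E3
    have E5 : ((C m * C c - 1) * C e - C c) * v = (C c * C e) * N := by
      apply mul_left_cancel₀ hN0
      linear_combination E3
    have hCk : ((C m * C c - 1) * C e - C c : Polynomial ℤ) = C ((m * c - 1) * e - c) := by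
      rw [map_sub, map_mul, map_sub, map_mul, map_one]
    rw [hCk] at E5
    have hce : (C c * C e : Polynomial ℤ) = C (c * e) := by rw [map_mul]
    rw [hce] at E5
    have hk0 : (m * c - 1) * e - c ≠ 0 := by
      intro h0
      rw [h0] at E5
      simp only [map_zero, zero_mul] at E5
      have : C (c * e) * N ≠ 0 := mul_ne_zero (by simpa using (mul_pos hc he).ne') hN0
      exact this E5.symm
    have hdvd3 : N ∣ C ((m * c - 1) * e - c) * v := ⟨C (c * e), by linear_combination E5⟩
    have hdvdv : N ∣ v := (hNp.2.2 _ _ hdvd3).resolve_left (notDvdC hn₁.ne' hk0)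
    obtain ⟨f, hf, hvf⟩ := quotConst hn₀ hn₁ hv hdv hdvdv
    rw [hvf] at E5
    have hkf : ((m * c - 1) * e - c) * f = c * e := by
      have h6 : (C (((m * c - 1) * e - c) * f) : Polynomial ℤ) * N = C (c * e) * N := by
        rw [map_mul]; linear_combination E5
      have h7 := mul_right_cancel₀ hN0 h6
      exact C_inj.mp h7
    nlinarith [mul_pos hc he, mul_pos he hf, mul_pos hc hf, mul_pos (mul_pos hc he) hf]
  have hmc0 : m * c - 1 ≠ 0 := by nlinarith
  have hdvd2 : N ∣ (C m * C c - 1) * (y * z) := ⟨C c * (y + z), by linear_combination E3⟩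
  rcases hNp.2.2 _ _ hdvd2 with hL | hR
  · have : (C m * C c - 1 : Polynomial ℤ) = C (m * c - 1) := by
      rw [map_sub, map_mul, map_one]
    rw [this] at hL
    exact notDvdC hn₁.ne' hmc0 hL
  · rcases hNp.2.2 _ _ hR with h | h
    · exact hkey y z hy hz hdy hdz E3 h
    · exact hkey z y hz hy hdz hdy (by linear_combination E3) h

private lemma d3Y (m n₀ n₁ : ℤ) (hm : 4 ≤ m) (hn₀ : 0 < n₀) (hn₁ : 0 < n₁)
    (hcop : Int.gcd n₀ n₁ = 1)
    (x y z : Polynomial ℤ) (hx : ∀ t : ℕ, 0 < x.eval (t : ℤ))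
    (hy : ∀ t : ℕ, 0 < y.eval (t : ℤ)) (hz : ∀ t : ℕ, 0 < z.eval (t : ℤ))
    (hdx : x.natDegree = 3) (hdy : y.natDegree = 1) (hdz : z.natDegree = 1)
    (D₀ : ℤ) (hD0 : D₀ ≠ 0)
    (hD : x * C D₀ = (C n₀ + C n₁ * X) * (y * z))
    (E : C m * (x * y * z) = (C n₀ + C n₁ * X) * (x * y + x * z + y * z))
    (hdvd : (C n₀ + C n₁ * X : Polynomial ℤ) ∣ y) : False := by
  set N : Polynomial ℤ := C n₀ + C n₁ * X with hN
  have hNp : Prime N := nPrime hn₁.ne' hcop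
  have hN0 : N ≠ 0 := hNp.ne_zero
  have hx0 : x ≠ 0 := fun h0 => by simpa [h0] using hx 0
  obtain ⟨e, he, hye⟩ := quotConst hn₀ hn₁ hy hdy hdvd
  rw [hye] at E hD
  have E3 : (C m * C e - 1) * (x * z) = C e * N * (x + z) := by
    apply mul_left_cancel₀ hN0
    linear_combination E
  -- first: N ∣ z leads to a contradiction
  have hzF : N ∣ z → False := by
    intro hdvdz
    obtain ⟨f, hf, hzf⟩ := quotConst hn₀ hn₁ hz hdz hdvdz
    rw [hzf] at E3
    have E5 : ((C m * C e - 1) * C f - C e) * x = (C e * C f) * N := by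
      apply mul_left_cancel₀ hN0
      linear_combination E3
    have hCk : ((C m * C e - 1) * C f - C e : Polynomial ℤ) = C ((m * e - 1) * f - e) := by
      rw [map_sub, map_mul, map_sub, map_mul, map_one]
    have hef : (C e * C f : Polynomial ℤ) = C (e * f) := by rw [map_mul]
    rw [hCk, hef] at E5
    have hk0 : (m * e - 1) * f - e ≠ 0 := by
      intro h0
      rw [h0] at E5
      simp only [map_zero, zero_mul] at E5
      have : C (e * f) * N ≠ 0 := mul_ne_zero (by simpa using (mul_pos he hf).ne') hN0
      exact this E5.symm
    have hdegL : (C ((m * e - 1) * f - e) * x).natDegree = 3 := by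
      rw [natDegree_C_mul hk0, hdx]
    have hdegR : (C (e * f) * N).natDegree = 1 := by
      rw [natDegree_C_mul (mul_pos he hf).ne', nDeg hn₁.ne']
    rw [E5, hdegR] at hdegL
    omega
  have hme0 : m * e - 1 ≠ 0 := by nlinarith
  have hdvd2 : N ∣ (C m * C e - 1) * (x * z) := ⟨C e * (x + z), by linear_combination E3⟩
  rcases hNp.2.2 _ _ hdvd2 with hL | hR
  · have : (C m * C e - 1 : Polynomial ℤ) = C (m * e - 1) := by
      rw [map_sub, map_mul, map_one]
    rw [this] at hL
    exact notDvdC hn₁.ne' hme0 hL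
  rcases hNp.2.2 _ _ hR with hdvdx | hdvdz
  swap
  · exact hzF hdvdz
  -- N ∣ x : then from hD, N ∣ w, then N ∣ z
  obtain ⟨w, hxw⟩ := hdvdx
  rw [hxw] at hD E3
  have hD2 : w * C D₀ = N * (C e * z) := by
    apply mul_left_cancel₀ hN0
    linear_combination hD
  have hdvdw : N ∣ w * C D₀ := ⟨C e * z, hD2⟩
  have hdvdw2 : N ∣ w :=
    ((hNp.2.2 _ _ hdvdw).resolve_right (notDvdC hn₁.ne' hD0))
  obtain ⟨v, hwv⟩ := hdvdw2
  rw [hwv] at E3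
  have E6 : C e * z = N * ((C m * C e - 1) * (v * z) - C e * N * v) := by
    apply mul_left_cancel₀ hN0
    linear_combination -E3
  have hdvd4 : N ∣ C e * z := ⟨_, E6⟩
  have hdvdz : N ∣ z := (hNp.2.2 _ _ hdvd4).resolve_left (notDvdC hn₁.ne' he.ne')
  exact hzF hdvdz

private lemma d3X (m n₀ n₁ : ℤ) (hm : 4 ≤ m) (hn₀ : 0 < n₀) (hn₁ : 0 < n₁)
    (hcop : Int.gcd n₀ n₁ = 1) (hcop' : Int.gcd n₁ m = 1)
    (x y z : Polynomial ℤ) (hx : ∀ t : ℕ, 0 < x.eval (t : ℤ))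
    (hdx : x.natDegree = 3) (hdy : y.natDegree = 1) (hdz : z.natDegree = 1)
    (D₀ : ℤ) (hD0 : D₀ ≠ 0)
    (hD : x * C D₀ = (C n₀ + C n₁ * X) * (y * z))
    (E : C m * (x * y * z) = (C n₀ + C n₁ * X) * (x * y + x * z + y * z))
    (hdvd : (C n₀ + C n₁ * X : Polynomial ℤ) ∣ x) : False := by
  set N : Polynomial ℤ := C n₀ + C n₁ * X with hN
  have hNp : Prime N := nPrime hn₁.ne' hcop
  have hN0 : N ≠ 0 := hNp.ne_zero
  have hm0 : m ≠ 0 := by omega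
  have hx0 : x ≠ 0 := fun h0 => by simpa [h0] using hx 0
  obtain ⟨w, hxw⟩ := hdvd
  have hw0 : w ≠ 0 := by rintro rfl; rw [mul_zero] at hxw; exact hx0 hxw
  have hdw : w.natDegree = 2 := by
    have h1 : x.natDegree = N.natDegree + w.natDegree := by
      rw [hxw]; exact natDegree_mul hN0 hw0
    rw [hdx, nDeg hn₁.ne'] at h1
    omega
  rw [hxw] at E hD
  have hyz : y * z = C D₀ * w := by
    apply mul_left_cancel₀ hN0
    linear_combination -hD
  have E2 : C m * (w * y * z) = N * w * (y + z) + y * z := by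
    apply mul_left_cancel₀ hN0
    linear_combination E
  rw [hyz] at E2
  have E4 : C m * C D₀ * w = N * (y + z) + C D₀ := by
    apply mul_left_cancel₀ hw0
    linear_combination E2 - C m * w * hyz
  have hdvd5 : N ∣ C D₀ * (C m * w - 1) := ⟨y + z, by linear_combination E4⟩
  have hdvdu : N ∣ C m * w - 1 :=
    (hNp.2.2 _ _ hdvd5).resolve_left (notDvdC hn₁.ne' hD0)
  obtain ⟨u, hu⟩ := hdvdu
  have hu0 : u ≠ 0 := by
    rintro rfl
    rw [mul_zero, sub_eq_zero] at hu
    have h2 : m * w.coeff 2 = (1 : Polynomial ℤ).coeff 2 := by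
      rw [← hu]; simp [coeff_C_mul]
    rw [coeff_one] at h2
    simp at h2
    rcases h2 with h2 | h2
    · exact hm0 h2
    · have : w.coeff 2 ≠ 0 := by
        rw [← hdw]; exact leadingCoeff_ne_zero.mpr hw0
      exact this h2
  have hdu : u.natDegree ≤ 1 := by
    have h1 : (N * u).natDegree ≤ 2 := by
      rw [← hu]
      refine le_trans (natDegree_sub_le _ _) ?_
      rw [natDegree_C_mul hm0, hdw, natDegree_one]
      simp
    rw [natDegree_mul hN0 hu0, nDeg hn₁.ne'] at h1
    omega
  have hu2 : u.coeff 2 = 0 := coeff_eq_zero_of_natDegree_lt (by omega)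
  have hNu : N * u = C n₀ * u + C n₁ * (X * u) := by rw [hN]; ring
  have c2 : m * w.coeff 2 = n₀ * u.coeff 2 + n₁ * u.coeff 1 := by
    have := congrArg (fun p => Polynomial.coeff p 2) hu
    simpa [hNu, coeff_C_mul, coeff_one, coeff_X_mul] using this
  have c1 : m * w.coeff 1 = n₀ * u.coeff 1 + n₁ * u.coeff 0 := by
    have := congrArg (fun p => Polynomial.coeff p 1) hu
    simpa [hNu, coeff_C_mul, coeff_one, coeff_X_mul] using this
  have c0 : m * w.coeff 0 - 1 = n₀ * u.coeff 0 := by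
    have := congrArg (fun p => Polynomial.coeff p 0) hu
    simpa [hNu, coeff_C_mul, coeff_one, mul_coeff_zero] using this
  rw [hu2, mul_zero, zero_add] at c2
  have hcm : IsCoprime (m : ℤ) n₁ := (Int.isCoprime_iff_gcd_eq_one.mpr hcop').symm
  have hmu1 : m ∣ u.coeff 1 := hcm.dvd_of_dvd_mul_left ⟨w.coeff 2, by linarith⟩
  have hmu0 : m ∣ u.coeff 0 := by
    apply hcm.dvd_of_dvd_mul_left
    have : n₁ * u.coeff 0 = m * w.coeff 1 - n₀ * u.coeff 1 := by linarith
    rw [this]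
    exact dvd_sub (Dvd.intro _ rfl) (Dvd.dvd.mul_left hmu1 n₀)
  have hm1 : m ∣ 1 := by
    have : (1 : ℤ) = m * w.coeff 0 - n₀ * u.coeff 0 := by linarith
    rw [this]
    exact dvd_sub (Dvd.intro _ rfl) (Dvd.dvd.mul_left hmu0 n₀)
  have := Int.le_of_dvd one_pos hm1
  omega

private lemma core (m n₀ n₁ : ℤ) (hm : 4 ≤ m) (hn₀ : 0 < n₀) (hn₁ : 0 < n₁)
    (hcop : Int.gcd n₀ n₁ = 1) (hcop' : Int.gcd n₁ m = 1)
    (x y z : Polynomial ℤ) (hx : ∀ t : ℕ, 0 < x.eval (t : ℤ))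
    (hy : ∀ t : ℕ, 0 < y.eval (t : ℤ)) (hz : ∀ t : ℕ, 0 < z.eval (t : ℤ))
    (E : C m * (x * y * z) = (C n₀ + C n₁ * X) * (x * y + x * z + y * z))
    (hde : y.natDegree ≤ x.natDegree) (hef : z.natDegree ≤ y.natDegree) :
    x.natDegree = 2 ∧ y.natDegree = 1 ∧ z.natDegree = 1 := by
  set N : Polynomial ℤ := C n₀ + C n₁ * X with hN
  have hNp : Prime N := nPrime hn₁.ne' hcop
  have hN0 : N ≠ 0 := hNp.ne_zero
  have hm0 : m ≠ 0 := by omega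
  have hx0 : x ≠ 0 := fun h0 => by simpa [h0] using hx 0
  have hy0 : y ≠ 0 := fun h0 => by simpa [h0] using hy 0
  have hz0 : z ≠ 0 := fun h0 => by simpa [h0] using hz 0
  have ha := lcPos hx
  have hb := lcPos hy
  have hc := lcPos hz
  set A := x.natDegree with hA
  set B := y.natDegree with hB
  set F := z.natDegree with hF
  set P : Polynomial ℤ := x * y + x * z + y * z with hP
  have hxy : (x * y).natDegree = A + B := natDegree_mul hx0 hy0
  have hxz : (x * z).natDegree = A + F := natDegree_mul hx0 hz0
  have hyz : (y * z).natDegree = B + F := natDegree_mul hy0 hz0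
  have hPd : P.natDegree ≤ A + B := by
    refine le_trans (natDegree_add_le _ _) ?_
    rw [hyz]
    refine max_le (le_trans (natDegree_add_le _ _) ?_) (by omega)
    rw [hxy, hxz]
    omega
  have hxzc : 0 ≤ (x * z).coeff (A + B) := by
    rcases lt_or_eq_of_le hef with h | h
    · rw [coeff_eq_zero_of_natDegree_lt (by omega : (x*z).natDegree < A + B)]
    · have : (x * z).natDegree = A + B := by omega
      rw [← this, ← leadingCoeff, leadingCoeff_mul]
      exact (mul_pos ha hc).le
  have hyzc : 0 ≤ (y * z).coeff (A + B) := by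
    rcases lt_or_eq_of_le (le_trans hef hde) with h | h
    · rw [coeff_eq_zero_of_natDegree_lt (by omega : (y*z).natDegree < A + B)]
    · have : (y * z).natDegree = A + B := by omega
      rw [← this, ← leadingCoeff, leadingCoeff_mul]
      exact (mul_pos hb hc).le
  have hxyc : (x * y).coeff (A + B) = x.leadingCoeff * y.leadingCoeff :=
    coeff_mul_degree_add_degree x y
  have hPc : 0 < P.coeff (A + B) := by
    rw [hP, coeff_add, coeff_add, hxyc]
    have := mul_pos ha hb
    nlinarith [hxzc, hyzc]
  have hP0 : P ≠ 0 := fun h0 => by rw [h0] at hPc; simp at hPc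
  have hPdeg : P.natDegree = A + B :=
    le_antisymm hPd (le_natDegree_of_ne_zero hPc.ne')
  -- degree equation gives F = 1
  have hdegE := congrArg natDegree E
  have hLdeg : (C m * (x * y * z)).natDegree = A + B + F := by
    rw [natDegree_C_mul hm0, natDegree_mul (mul_ne_zero hx0 hy0) hz0, hxy]
  have hRdeg : (N * P).natDegree = 1 + (A + B) := by
    rw [natDegree_mul hN0 hP0, nDeg hn₁.ne', hPdeg]
  rw [hLdeg, hRdeg] at hdegE
  have hF1 : F = 1 := by omega
  -- leading coefficient equation
  have hL : (C m * (x * y * z)).coeff (A + B + 1) =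
      m * (x.leadingCoeff * y.leadingCoeff * z.leadingCoeff) := by
    rw [coeff_C_mul]
    have h1 : (x * y * z).natDegree = A + B + 1 := by
      rw [natDegree_mul (mul_ne_zero hx0 hy0) hz0, hxy, ← hF, hF1]
    rw [← h1, ← leadingCoeff, leadingCoeff_mul, leadingCoeff_mul]
  have hNlc : N.leadingCoeff = n₁ := by
    have : N = C n₁ * X + C n₀ := by rw [hN]; ring
    rw [this]; exact leadingCoeff_linear hn₁.ne'
  have hR : (N * P).coeff (A + B + 1) = n₁ * P.coeff (A + B) := by
    have h1 : (N * P).natDegree = A + B + 1 := by rw [hRdeg]; omega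
    rw [← h1, ← leadingCoeff, leadingCoeff_mul, hNlc]
    congr 1
    rw [leadingCoeff, hPdeg]
  have htop : m * (x.leadingCoeff * y.leadingCoeff * z.leadingCoeff) =
      n₁ * P.coeff (A + B) := by
    rw [← hL, ← hR, E]
  -- rule out B ≥ 2
  have hB1 : B = 1 := by
    by_contra hB2
    have hB2' : 2 ≤ B := by omega
    have h1 : (x * z).coeff (A + B) = 0 :=
      coeff_eq_zero_of_natDegree_lt (by omega)
    have h2 : (y * z).coeff (A + B) = 0 :=
      coeff_eq_zero_of_natDegree_lt (by omega)
    have h3 : P.coeff (A + B) = x.leadingCoeff * y.leadingCoeff := by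
      rw [hP, coeff_add, coeff_add, hxyc, h1, h2, add_zero, add_zero]
    rw [h3] at htop
    have h4 : (x.leadingCoeff * y.leadingCoeff) * (m * z.leadingCoeff - n₁) = 0 := by
      linear_combination htop
    have h5 : m * z.leadingCoeff = n₁ := by
      rcases mul_eq_zero.mp h4 with h | h
      · exact absurd h (mul_pos ha hb).ne'
      · linarith [sub_eq_zero.mp h]
    have h6 : m ∣ n₁ := ⟨z.leadingCoeff, h5.symm⟩
    have h7 : m ∣ (Int.gcd n₁ m : ℤ) := Int.dvd_coe_gcd h6 dvd_rfl
    rw [hcop'] at h7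
    have := Int.le_of_dvd one_pos h7
    omega
  -- now F = 1, B = 1, A ≥ 1.
  have hNd : N ∣ x * y * z := by
    have h1 : N ∣ C m * (x * y * z) := ⟨P, E⟩
    exact (hNp.2.2 _ _ h1).resolve_left (notDvdC hn₁.ne' hm0)
  have hNone : N ∣ x ∨ N ∣ y ∨ N ∣ z := by
    rcases hNp.2.2 _ _ hNd with h | h
    · rcases hNp.2.2 _ _ h with h' | h'
      · exact Or.inl h'
      · exact Or.inr (Or.inl h')
    · exact Or.inr (Or.inr h)
  rcases lt_or_ge A 2 with hA1 | hA2
  · -- A = 1 : contradiction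
    exfalso
    have hA1' : A = 1 := by omega
    rcases hNone with h | h | h
    · exact deg1X m n₀ n₁ hm hn₀ hn₁ hcop x y z hx hy hz hA1' hB1 hF1 E h
    · exact deg1X m n₀ n₁ hm hn₀ hn₁ hcop y x z hy hx hz hB1 hA1' hF1
        (by linear_combination E) h
    · exact deg1X m n₀ n₁ hm hn₀ hn₁ hcop z y x hz hy hx hF1 hB1 hA1'
        (by linear_combination E) h
  rcases eq_or_lt_of_le hA2 with hA2' | hA3
  · exact ⟨hA2'.symm, hB1, hF1⟩
  -- A ≥ 3 : contradiction
  exfalso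
  set D : Polynomial ℤ := C m * (y * z) - N * (y + z) with hD
  have hxD : x * D = N * (y * z) := by rw [hD]; linear_combination E
  have hD0 : D ≠ 0 := by
    intro h0
    rw [h0, mul_zero] at hxD
    exact (mul_ne_zero hN0 (mul_ne_zero hy0 hz0)) hxD.symm
  have hDdeg : A + D.natDegree = 3 := by
    have h1 := congrArg natDegree hxD
    rw [natDegree_mul hx0 hD0, natDegree_mul hN0 (mul_ne_zero hy0 hz0),
      nDeg hn₁.ne', hyz, hB1, hF1] at h1
    omega
  have hA3' : A = 3 := by omega
  have hDdeg0 : D.natDegree = 0 := by omega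
  obtain ⟨D₀, hD₀⟩ : ∃ d, D = C d := ⟨D.coeff 0, Polynomial.eq_C_of_natDegree_eq_zero hDdeg0⟩
  have hD₀0 : D₀ ≠ 0 := by rintro rfl; rw [map_zero] at hD₀; exact hD0 hD₀
  rw [hD₀] at hxD
  rcases hNone with h | h | h
  · exact d3X m n₀ n₁ hm hn₀ hn₁ hcop hcop' x y z hx hA3' hB1 hF1 D₀ hD₀0 hxD E h
  · exact d3Y m n₀ n₁ hm hn₀ hn₁ hcop x y z hx hy hz hA3' hB1 hF1 D₀ hD₀0 hxD E h
  · exact d3Y m n₀ n₁ hm hn₀ hn₁ hcop x z y hx hz hy hA3' hF1 hB1 D₀ hD₀0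
      (by linear_combination hxD) (by linear_combination E) h

theorem degree_classification' (m n₀ n₁ : ℤ) (hm : 4 ≤ m) (hn₀ : 0 < n₀) (hn₁ : 0 < n₁)
    (hcop : Int.gcd n₀ n₁ = 1) (hcop' : Int.gcd n₁ m = 1)
    (x y z : Polynomial ℤ)
    (hx : ∀ t : ℕ, 0 < x.eval (t : ℤ)) (hy : ∀ t : ℕ, 0 < y.eval (t : ℤ))
    (hz : ∀ t : ℕ, 0 < z.eval (t : ℤ))
    (E : C m * (x * y * z) = (C n₀ + C n₁ * X) * (x * y + x * z + y * z)) :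
    (x.natDegree = 2 ∧ y.natDegree = 1 ∧ z.natDegree = 1) ∨
    (x.natDegree = 1 ∧ y.natDegree = 2 ∧ z.natDegree = 1) ∨
    (x.natDegree = 1 ∧ y.natDegree = 1 ∧ z.natDegree = 2) := by
  rcases le_total y.natDegree x.natDegree with h1 | h1
  · rcases le_total z.natDegree y.natDegree with h2 | h2
    · obtain ⟨a, b, c⟩ := core m n₀ n₁ hm hn₀ hn₁ hcop hcop' x y z hx hy hz E h1 h2
      exact Or.inl ⟨a, b, c⟩
    · rcases le_total z.natDegree x.natDegree with h3 | h3
      · obtain ⟨a, b, c⟩ := core m n₀ n₁ hm hn₀ hn₁ hcop hcop' x z y hx hz hy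
          (by linear_combination E) h3 h2
        exact Or.inl ⟨a, c, b⟩
      · obtain ⟨a, b, c⟩ := core m n₀ n₁ hm hn₀ hn₁ hcop hcop' z x y hz hx hy
          (by linear_combination E) h3 h1
        exact Or.inr (Or.inr ⟨b, c, a⟩)
  · rcases le_total z.natDegree x.natDegree with h2 | h2
    · obtain ⟨a, b, c⟩ := core m n₀ n₁ hm hn₀ hn₁ hcop hcop' y x z hy hx hz
        (by linear_combination E) h1 h2
      exact Or.inr (Or.inl ⟨b, a, c⟩)
    · rcases le_total z.natDegree y.natDegree with h3 | h3
      · obtain ⟨a, b, c⟩ := core m n₀ n₁ hm hn₀ hn₁ hcop hcop' y z x hy hz hx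
          (by linear_combination E) h3 h2
        exact Or.inr (Or.inl ⟨c, a, b⟩)
      · obtain ⟨a, b, c⟩ := core m n₀ n₁ hm hn₀ hn₁ hcop hcop' z y x hz hy hx
          (by linear_combination E) h3 h1
        exact Or.inr (Or.inr ⟨c, b, a⟩)

/-- `x, y, z ∈ ℤ[λ]` form an integer polynomial solution of equation (2). -/
def IsIntPolySolution (m n₀ n₁ : ℤ) (x y z : Polynomial ℤ) : Prop :=
  (∀ t : ℕ, 0 < x.eval (t : ℤ)) ∧ (∀ t : ℕ, 0 < y.eval (t : ℤ)) ∧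
  (∀ t : ℕ, 0 < z.eval (t : ℤ)) ∧
  C m * (x * y * z) = (C n₀ + C n₁ * X) * (x * y + x * z + y * z)

/-- Degree classification: in any integer polynomial solution of (2), exactly
two of the polynomials have degree 1 and the remaining one has degree 2. -/
theorem degree_classification (m n₀ n₁ : ℤ) (hm : 4 ≤ m) (hn₀ : 0 < n₀) (hn₁ : 0 < n₁)
    (hcop : Int.gcd n₀ n₁ = 1) (hcop' : Int.gcd n₁ m = 1)
    (x y z : Polynomial ℤ) (hsol : IsIntPolySolution m n₀ n₁ x y z) :
    (x.natDegree = 2 ∧ y.natDegree = 1 ∧ z.natDegree = 1) ∨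
    (x.natDegree = 1 ∧ y.natDegree = 2 ∧ z.natDegree = 1) ∨
    (x.natDegree = 1 ∧ y.natDegree = 1 ∧ z.natDegree = 2) := by
  obtain ⟨hx, hy, hz, E⟩ := hsol
  exact degree_classification' m n₀ n₁ hm hn₀ hn₁ hcop hcop' x y z hx hy hz E
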